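/- Suppose E is finite dimensional, A(X,E) contains the constant functions, and there exists a complete norm ‖·‖ on A(X,E) with ‖·‖ ≥ ‖·‖_∞ such that (A(X,E), ‖·‖) has property (P) and ‖g·f‖ ≤ ‖g‖_{A(X)} ‖f‖ for all g ∈ A(X) and f ∈ A(X,E). Let T, S : A(X,E) → C(Y,F) be jointly separating linear maps. Then φ(⋃_{v* ∈ F*} Y_d^{v*}) is a finite set consisting of limit (non-isolated) points of X, where for each v* ∈ F*, Y_d^{v*} = Y₁^{v*} ∖ (Y_cT^{v*} ∩ Y_cS^{v*}) and φ is the common support map on Y₁. -/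

import Mathlib

open Set Filter Topology

/-- `B` together with the norm `nB` is a regular Banach function algebra on the
compact Hausdorff space `X`: it separates points (it contains the constants since it
is a subalgebra), `nB` is a complete algebra norm on `B` dominating the sup norm, and
the regularity (partition of unity) property holds. -/
structure IsRegularBanachFunctionAlgebra {X : Type*} [TopologicalSpace X] [CompactSpace X]
    [T2Space X] (B : Subalgebra ℂ C(X, ℂ)) (nB : C(X, ℂ) → ℝ) : Prop where
  separates : ∀ x y : X, x ≠ y → ∃ f ∈ B, f x ≠ f y
  norm_nonneg : ∀ f ∈ B, 0 ≤ nB f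
  norm_add_le : ∀ f ∈ B, ∀ g ∈ B, nB (f + g) ≤ nB f + nB g
  norm_smul : ∀ (c : ℂ), ∀ f ∈ B, nB (c • f) = ‖c‖ * nB f
  norm_eq_zero_iff : ∀ f ∈ B, (nB f = 0 ↔ f = 0)
  norm_mul_le : ∀ f ∈ B, ∀ g ∈ B, nB (f * g) ≤ nB f * nB g
  sup_norm_le : ∀ f ∈ B, ‖f‖ ≤ nB f
  complete : ∀ u : ℕ → C(X, ℂ), (∀ n, u n ∈ B) →
    (∀ ε : ℝ, 0 < ε → ∃ N : ℕ, ∀ m ≥ N, ∀ n ≥ N, nB (u m - u n) < ε) →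
    ∃ l ∈ B, ∀ ε : ℝ, 0 < ε → ∃ N : ℕ, ∀ n ≥ N, nB (u n - l) < ε
  regular : ∀ K : Set X, IsCompact K → ∀ (n : ℕ) (U : Fin n → Set X),
    (∀ i, IsOpen (U i)) → K ⊆ ⋃ i, U i →
    ∃ g : Fin n → C(X, ℂ), (∀ i, g i ∈ B) ∧ (∀ i, closure {x | g i x ≠ 0} ⊆ U i) ∧
      ∀ x ∈ K, (∑ i, g i x) = 1

variable {X Y E F : Type*} [TopologicalSpace X] [CompactSpace X] [T2Space X]
  [TopologicalSpace Y] [CompactSpace Y] [T2Space Y]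
  [NormedAddCommGroup E] [NormedSpace ℂ E] [CompleteSpace E]
  [NormedAddCommGroup F] [NormedSpace ℂ F] [CompleteSpace F]
  (A : Submodule ℂ C(X, E))

/-- The cozero set of a function in the subspace `A = A(X,E)` of `C(X,E)`. -/
def coz (f : ↥A) : Set X := {x | (f : C(X, E)) x ≠ 0}

/-- `T, S : A(X,E) → C(Y,F)` are jointly separating: `coz(Tf) ∩ coz(Sg) = ∅` whenever
`coz(f) ∩ coz(g) = ∅`. -/
def JointlySeparatingV (T S : ↥A →ₗ[ℂ] C(Y, F)) : Prop :=
  ∀ f g : ↥A, coz A f ∩ coz A g = ∅ → {y | T f y ≠ 0} ∩ {y | S g y ≠ 0} = ∅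

/-- The set `Y₁ = (⋃_f coz(Tf)) ∩ (⋃_f coz(Sf))`. -/
def Y1V (T S : ↥A →ₗ[ℂ] C(Y, F)) : Set Y :=
  {y | (∃ f : ↥A, T f y ≠ 0) ∧ (∃ f : ↥A, S f y ≠ 0)}

/-- For `v* ∈ F*`, the set `Y₁^{v*} = (⋃_f coz(v*∘Tf)) ∩ (⋃_f coz(v*∘Sf))`. -/
def Y1v (T S : ↥A →ₗ[ℂ] C(Y, F)) (v : F →L[ℂ] ℂ) : Set Y :=
  {y | (∃ f : ↥A, v (T f y) ≠ 0) ∧ (∃ f : ↥A, v (S f y) ≠ 0)}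

/-- `x` is a support point of `y` for the pair of (scalar-valued) maps `T', S'`. -/
def IsSupportPointFor (T' S' : ↥A → Y → ℂ) (y : Y) (x : X) : Prop :=
  ∀ V ∈ 𝓝 x, ∃ f : ↥A, coz A f ⊆ V ∧ (T' f y ≠ 0 ∨ S' f y ≠ 0)

/-- `(A(X,E), nn)` has property (P): for every `f ∈ A(X,E)` and `x ∈ X` with `f(x) = 0`
there is a sequence `(fₙ)` in `A(X,E)`, each term vanishing on a neighborhood of `x`,
with `nn (fₙ - f) → 0`. -/
def HasPropertyP (A : Submodule ℂ C(X, E)) (nn : C(X, E) → ℝ) : Prop :=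
  ∀ f : ↥A, ∀ x : X, (f : C(X, E)) x = 0 →
    ∃ u : ℕ → C(X, E), (∀ n, u n ∈ A) ∧ (∀ n, ∀ᶠ z in 𝓝 x, u n z = 0) ∧
      Filter.Tendsto (fun n => nn (u n - (f : C(X, E)))) Filter.atTop (𝓝 0)

/-- `nn` is a complete norm on the subspace `A = A(X,E)` of `C(X,E)` dominating the
sup norm. -/
structure IsCompleteNormOn {X E : Type*} [TopologicalSpace X] [CompactSpace X] [T2Space X]
    [NormedAddCommGroup E] [NormedSpace ℂ E]
    (A : Submodule ℂ C(X, E)) (nn : C(X, E) → ℝ) : Prop where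
  nonneg : ∀ f ∈ A, 0 ≤ nn f
  add_le : ∀ f ∈ A, ∀ g ∈ A, nn (f + g) ≤ nn f + nn g
  smul : ∀ (c : ℂ), ∀ f ∈ A, nn (c • f) = ‖c‖ * nn f
  eq_zero_iff : ∀ f ∈ A, (nn f = 0 ↔ f = 0)
  sup_norm_le : ∀ f ∈ A, ‖f‖ ≤ nn f
  complete : ∀ u : ℕ → C(X, E), (∀ n, u n ∈ A) →
    (∀ ε : ℝ, 0 < ε → ∃ N : ℕ, ∀ m ≥ N, ∀ n ≥ N, nn (u m - u n) < ε) →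
    ∃ l ∈ A, ∀ ε : ℝ, 0 < ε → ∃ N : ℕ, ∀ n ≥ N, nn (u n - l) < ε




theorem exists_urysohn_B (B : Subalgebra ℂ C(X, ℂ)) (nB : C(X, ℂ) → ℝ)
    (hB : IsRegularBanachFunctionAlgebra B nB) {V : Set X} (hV : IsOpen V) {x : X} (hx : x ∈ V) :
    ∃ u : C(X, ℂ), u ∈ B ∧ closure {z | u z ≠ 0} ⊆ V ∧
      ∃ W : Set X, IsOpen W ∧ x ∈ W ∧ W ⊆ V ∧ ∀ z ∈ W, u z = 1 := by
  obtain ⟨t, ht, htc, hts⟩ := exists_mem_nhds_isClosed_subset (hV.mem_nhds hx)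
  set U : Fin 2 → Set X := ![V, tᶜ] with hU
  obtain ⟨g, hgB, hgs, hg1⟩ := hB.regular univ isCompact_univ 2 U
    (by intro i; fin_cases i <;> simp [U, hV, htc.isOpen_compl])
    (by intro z _
        rcases em (z ∈ t) with h | h
        · exact mem_iUnion.2 ⟨0, hts h⟩
        · exact mem_iUnion.2 ⟨1, h⟩)
  refine ⟨g 0, hgB 0, by simpa [U] using hgs 0, interior t, isOpen_interior,
    mem_interior_iff_mem_nhds.2 ht, interior_subset.trans hts, ?_⟩
  intro z hz
  have h1 : g 1 z = 0 := by
    by_contra h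
    have hcl : z ∈ closure {w | g 1 w ≠ 0} := subset_closure h
    have := hgs 1 hcl
    simp only [hU, Matrix.cons_val_one, Matrix.head_cons, mem_compl_iff] at this
    exact this (interior_subset hz)
  have hsum := hg1 z (mem_univ z)
  rw [Fin.sum_univ_two] at hsum
  linear_combination hsum - h1

theorem exists_disjoint_nbhds {S : Set X} (hS : S.Infinite) :
    ∃ (x : ℕ → X) (U : ℕ → Set X), (∀ n, x n ∈ S) ∧ (∀ n, IsOpen (U n)) ∧
      (∀ n, x n ∈ U n) ∧ ∀ m n, m ≠ n → U m ∩ U n = ∅ := by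
  classical
  have step : ∀ (s O : Set X), s.Infinite → IsOpen O → s ⊆ O →
      ∃ z U, z ∈ s ∧ IsOpen U ∧ z ∈ U ∧ U ⊆ O ∧ (s \ closure U).Infinite := by
    intro s O hs hO hsO
    obtain ⟨a, ha, b, hb, hab⟩ := hs.nontrivial
    obtain ⟨Aa, Ab, hAa, hAb, haA, hbB, hdisj⟩ := t2_separation hab
    obtain ⟨ta, hta, htac, htaA⟩ := exists_mem_nhds_isClosed_subset (hAa.mem_nhds haA)
    obtain ⟨tb, htb, htbc, htbB⟩ := exists_mem_nhds_isClosed_subset (hAb.mem_nhds hbB)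
    have hcover : s ⊆ (s \ ta) ∪ (s \ tb) := by
      intro z hz
      rcases em (z ∈ ta) with h | h
      · right
        refine ⟨hz, fun h2 => ?_⟩
        exact (hdisj.le_bot ⟨htaA h, htbB h2⟩ : z ∈ (∅ : Set X))
      · exact Or.inl ⟨hz, h⟩
    rcases Set.infinite_union.mp (hs.mono hcover) with h | h
    · refine ⟨a, interior ta ∩ O, ha, isOpen_interior.inter hO,
        ⟨mem_interior_iff_mem_nhds.2 hta, hsO ha⟩, inter_subset_right, h.mono ?_⟩
      refine diff_subset_diff_right ?_
      calc closure (interior ta ∩ O) ⊆ closure (interior ta) :=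
            closure_mono inter_subset_left
        _ ⊆ ta := closure_minimal interior_subset htac
    · refine ⟨b, interior tb ∩ O, hb, isOpen_interior.inter hO,
        ⟨mem_interior_iff_mem_nhds.2 htb, hsO hb⟩, inter_subset_right, h.mono ?_⟩
      refine diff_subset_diff_right ?_
      calc closure (interior tb ∩ O) ⊆ closure (interior tb) :=
            closure_mono inter_subset_left
        _ ⊆ tb := closure_minimal interior_subset htbc
  let Pk := {p : Set X × Set X // p.1.Infinite ∧ IsOpen p.2 ∧ p.1 ⊆ p.2}
  have step' : ∀ p : Pk, ∃ q : X × Set X × Pk,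
      q.1 ∈ p.1.1 ∧ IsOpen q.2.1 ∧ q.1 ∈ q.2.1 ∧ q.2.1 ⊆ p.1.2 ∧
      q.2.2.1.1 = p.1.1 \ closure q.2.1 ∧ q.2.2.1.2 = p.1.2 ∩ (closure q.2.1)ᶜ := by
    rintro ⟨⟨s, O⟩, hs, hO, hsO⟩
    obtain ⟨z, U, hz, hU, hzU, hUO, hrem⟩ := step s O hs hO hsO
    exact ⟨⟨z, U, ⟨⟨s \ closure U, O ∩ (closure U)ᶜ⟩, hrem,
      hO.inter isClosed_closure.isOpen_compl,
      fun w hw => ⟨hsO hw.1, fun hc => hw.2 hc⟩⟩⟩, hz, hU, hzU, hUO, rfl, rfl⟩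
  choose nxt hnxt using step'
  let F : ℕ → Pk := fun n => Nat.rec ⟨⟨S, univ⟩, hS, isOpen_univ, subset_univ _⟩
    (fun _ p => (nxt p).2.2) n
  have hFsucc : ∀ n, F (n + 1) = (nxt (F n)).2.2 := fun n => rfl
  refine ⟨fun n => (nxt (F n)).1, fun n => (nxt (F n)).2.1, ?_, ?_, ?_, ?_⟩
  · -- x n ∈ S
    have hsub : ∀ n, (F n).1.1 ⊆ S := by
      intro n
      induction n with
      | zero => exact fun z hz => hz
      | succ k ih =>
        rw [hFsucc, (hnxt (F k)).2.2.2.2.1]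
        exact fun z hz => ih hz.1
    exact fun n => hsub n (hnxt (F n)).1
  · exact fun n => (hnxt (F n)).2.1
  · exact fun n => (hnxt (F n)).2.2.1
  · have hmono : ∀ m n, m < n → (F n).1.2 ⊆ (closure (nxt (F m)).2.1)ᶜ := by
      intro m n hmn
      induction n with
      | zero => omega
      | succ k ih =>
        rcases Nat.lt_succ_iff_lt_or_eq.mp hmn with h | h
        · rw [hFsucc, (hnxt (F k)).2.2.2.2.2]
          exact inter_subset_left.trans (ih h)
        · subst h
          rw [hFsucc, (hnxt (F m)).2.2.2.2.2]
          exact inter_subset_right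
    have haux : ∀ m n, m < n → (nxt (F m)).2.1 ∩ (nxt (F n)).2.1 = ∅ := by
      intro m n hmn
      apply Set.eq_empty_iff_forall_notMem.2
      rintro z ⟨hz1, hz2⟩
      have : z ∈ (F n).1.2 := (hnxt (F n)).2.2.2.1 hz2
      exact hmono m n hmn this (subset_closure hz1)
    intro m n hmn
    rcases lt_or_gt_of_ne hmn with h | h
    · exact haux m n h
    · rw [inter_comm]; exact haux n m h


/-- The scalar functional `f ↦ v (R f y)` as a linear map. -/
noncomputable def psiAux (R : ↥A →ₗ[ℂ] C(Y, F)) (v : F →L[ℂ] ℂ) (y : Y) : ↥A →ₗ[ℂ] ℂ where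
  toFun := fun f => v (R f y)
  map_add' := fun f g => by
    show v (R (f + g) y) = _
    rw [map_add, ContinuousMap.add_apply, map_add]
  map_smul' := fun c f => by
    show v (R (c • f) y) = _
    rw [map_smul, ContinuousMap.smul_apply, map_smul]
    rfl

theorem key_vanish {B : Subalgebra ℂ C(X, ℂ)} {nB : C(X, ℂ) → ℝ}
    (hB : IsRegularBanachFunctionAlgebra B nB)
    (hmod : ∀ g ∈ B, ∀ f : ↥A, g • (f : C(X, E)) ∈ A)
    {T S : ↥A →ₗ[ℂ] C(Y, F)} (hTS : JointlySeparatingV A T S)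
    (v : F →L[ℂ] ℂ) (y : Y) (x : X)
    (hy : y ∈ Y1v A T S v)
    (hsp : IsSupportPointFor A (fun f y => v (T f y)) (fun f y => v (S f y)) y x)
    {V : Set X} (hV : IsOpen V) (hxV : x ∈ V)
    (f : ↥A) (hf : ∀ z ∈ V, (f : C(X, E)) z = 0) :
    v (T f y) = 0 ∧ v (S f y) = 0 := by
  obtain ⟨u, huB, hucl, W, hWo, hxW, hWV, hu1⟩ := exists_urysohn_B B nB hB hV hxV
  -- the localized and delocalized parts of any h : ↥A
  let uh : ↥A → ↥A := fun h => ⟨u • (h : C(X, E)), hmod u huB h⟩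
  have huh_coz : ∀ h : ↥A, ∀ z : X, ((uh h : ↥A) : C(X, E)) z ≠ 0 → z ∈ V := by
    intro h z hz
    have hz' : u z • (h : C(X, E)) z ≠ 0 := by
      simpa [uh, ContinuousMap.smul_apply'] using hz
    have huz : u z ≠ 0 := fun h0 => hz' (by simp [h0])
    exact hucl (subset_closure huz)
  have hrest_W : ∀ h : ↥A, ∀ z ∈ W, ((h - uh h : ↥A) : C(X, E)) z = 0 := by
    intro h z hz
    have : u z = 1 := hu1 z hz
    simp [uh, ContinuousMap.smul_apply', this]
  -- disjointness helpers
  have hdisj_f_loc : ∀ h : ↥A, coz A f ∩ coz A (uh h) = ∅ := by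
    intro h
    apply Set.eq_empty_iff_forall_notMem.2
    rintro z ⟨hz1, hz2⟩
    exact hz1 (hf z (huh_coz h z hz2))
  have hdisj_W : ∀ (h g : ↥A), coz A g ⊆ W → coz A g ∩ coz A (h - uh h) = ∅ := by
    intro h g hg
    apply Set.eq_empty_iff_forall_notMem.2
    rintro z ⟨hz1, hz2⟩
    exact hz2 (hrest_W h z (hg hz1))
  have hdisj_f_W : ∀ g : ↥A, coz A g ⊆ W → coz A f ∩ coz A g = ∅ := by
    intro g hg
    apply Set.eq_empty_iff_forall_notMem.2
    rintro z ⟨hz1, hz2⟩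
    exact hz1 (hf z (hWV (hg hz2)))
  rw [Y1v, Set.mem_setOf_eq] at hy
  obtain ⟨⟨hT, hTne⟩, ⟨hS, hSne⟩⟩ := hy
  constructor
  · -- v (T f y) = 0
    by_contra hTf
    have hTfy : T f y ≠ 0 := fun h0 => hTf (by simp [h0])
    -- kill the localized part of hS
    have h1 : S (uh hS) y = 0 := by
      have := hTS f (uh hS) (hdisj_f_loc hS)
      by_contra hne
      exact (Set.eq_empty_iff_forall_notMem.1 this y) ⟨hTfy, hne⟩
    have h2 : v (S (hS - uh hS) y) ≠ 0 := by
      have : S hS = S (uh hS) + S (hS - uh hS) := by rw [← map_add]; congr 1; abel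
      rw [this, ContinuousMap.add_apply, map_add, h1] at hSne
      simpa using hSne
    have hSrest : S (hS - uh hS) y ≠ 0 := fun h0 => h2 (by rw [h0]; exact map_zero v)
    obtain ⟨g, hgcoz, hgor⟩ := hsp W (hWo.mem_nhds hxW)
    rcases hgor with hg | hg
    · have hTgy : T g y ≠ 0 := fun h0 => hg (by simp [h0])
      have := hTS g (hS - uh hS) (hdisj_W hS g hgcoz)
      exact (Set.eq_empty_iff_forall_notMem.1 this y) ⟨hTgy, hSrest⟩
    · have hSgy : S g y ≠ 0 := fun h0 => hg (by simp [h0])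
      have := hTS f g (hdisj_f_W g hgcoz)
      exact (Set.eq_empty_iff_forall_notMem.1 this y) ⟨hTfy, hSgy⟩
  · -- v (S f y) = 0
    by_contra hSf
    have hSfy : S f y ≠ 0 := fun h0 => hSf (by simp [h0])
    have h1 : T (uh hT) y = 0 := by
      have hd : coz A (uh hT) ∩ coz A f = ∅ := by
        rw [Set.inter_comm]; exact hdisj_f_loc hT
      have := hTS (uh hT) f hd
      by_contra hne
      exact (Set.eq_empty_iff_forall_notMem.1 this y) ⟨hne, hSfy⟩
    have h2 : v (T (hT - uh hT) y) ≠ 0 := by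
      have : T hT = T (uh hT) + T (hT - uh hT) := by rw [← map_add]; congr 1; abel
      rw [this, ContinuousMap.add_apply, map_add, h1] at hTne
      simpa using hTne
    have hTrest : T (hT - uh hT) y ≠ 0 := fun h0 => h2 (by rw [h0]; exact map_zero v)
    obtain ⟨g, hgcoz, hgor⟩ := hsp W (hWo.mem_nhds hxW)
    rcases hgor with hg | hg
    · have hTgy : T g y ≠ 0 := fun h0 => hg (by simp [h0])
      have hd : coz A g ∩ coz A f = ∅ := by
        rw [Set.inter_comm]; exact hdisj_f_W g hgcoz
      have := hTS g f hd
      exact (Set.eq_empty_iff_forall_notMem.1 this y) ⟨hTgy, hSfy⟩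
    · have hSgy : S g y ≠ 0 := fun h0 => hg (by simp [h0])
      have hd : coz A (hT - uh hT) ∩ coz A g = ∅ := by
        rw [Set.inter_comm]; exact hdisj_W hT g hgcoz
      have := hTS (hT - uh hT) g hd
      exact (Set.eq_empty_iff_forall_notMem.1 this y) ⟨hTrest, hSgy⟩

theorem cont_of_eq_eval [FiniteDimensional ℂ E] (ψ : ↥A →ₗ[ℂ] ℂ) (x : X)
    (L : E →ₗ[ℂ] ℂ) (hL : ∀ f : ↥A, ψ f = L ((f : C(X, E)) x)) :
    Continuous fun f : ↥A => ψ f := by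
  have heq : (fun f : ↥A => ψ f) = fun f : ↥A => L ((f : C(X, E)) x) := funext hL
  rw [heq]
  exact L.continuous_of_finiteDimensional.comp
    ((continuous_eval_const x).comp continuous_subtype_val)

theorem cont_of_isolated [FiniteDimensional ℂ E]
    {B : Subalgebra ℂ C(X, ℂ)} {nB : C(X, ℂ) → ℝ}
    (hB : IsRegularBanachFunctionAlgebra B nB)
    (hmod : ∀ g ∈ B, ∀ f : ↥A, g • (f : C(X, E)) ∈ A)
    (hconst : ∀ e : E, ContinuousMap.const X e ∈ A)
    (ψ : ↥A →ₗ[ℂ] ℂ) (x : X) (hx : IsOpen ({x} : Set X))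
    (hvan : ∀ f : ↥A, (∀ z ∈ ({x} : Set X), (f : C(X, E)) z = 0) → ψ f = 0) :
    Continuous fun f : ↥A => ψ f := by
  obtain ⟨u, huB, hucl, W, hWo, hxW, hWx, hu1⟩ := exists_urysohn_B B nB hB hx rfl
  have hux : u x = 1 := hu1 x hxW
  let q : E →ₗ[ℂ] ↥A :=
    { toFun := fun e => ⟨u • (ContinuousMap.const X e), hmod u huB ⟨_, hconst e⟩⟩
      map_add' := by
        intro e e'
        apply Subtype.ext
        ext z
        show u z • (e + e') = u z • e + u z • e'
        exact smul_add _ _ _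
      map_smul' := by
        intro c e
        apply Subtype.ext
        ext z
        show u z • (c • e) = c • (u z • e)
        exact smul_comm _ _ _ }
  refine cont_of_eq_eval A ψ x (ψ ∘ₗ q) ?_
  intro f
  have hval : ((f - q ((f : C(X, E)) x) : ↥A) : C(X, E)) x = 0 := by
    have hc : ((f - q ((f : C(X, E)) x) : ↥A) : C(X, E)) x
        = (f : C(X, E)) x - u x • (f : C(X, E)) x := rfl
    rw [hc, hux, one_smul, sub_self]
  have h2 := hvan _ (fun z hz => by
    have hz' : z = x := hz
    rw [hz']
    exact hval)
  rw [map_sub, sub_eq_zero] at h2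
  exact h2

theorem cont_of_nn_bounded [FiniteDimensional ℂ E]
    (hconst : ∀ e : E, ContinuousMap.const X e ∈ A)
    {nn : C(X, E) → ℝ} (hnn : IsCompleteNormOn A nn) (hP : HasPropertyP A nn)
    (ψ : ↥A →ₗ[ℂ] ℂ) (x : X)
    (hvan : ∀ f : ↥A, ∀ V : Set X, IsOpen V → x ∈ V →
      (∀ z ∈ V, (f : C(X, E)) z = 0) → ψ f = 0)
    (C : ℝ) (hC : ∀ f : ↥A, ‖ψ f‖ ≤ C * nn (f : C(X, E))) :
    Continuous fun f : ↥A => ψ f := by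
  set C' := max C 0 with hC'def
  have hC'0 : (0:ℝ) ≤ C' := le_max_right _ _
  have hC'le : ∀ f : ↥A, ‖ψ f‖ ≤ C' * nn (f : C(X, E)) :=
    fun f => (hC f).trans (mul_le_mul_of_nonneg_right (le_max_left _ _) (hnn.nonneg _ f.2))
  have nnsymm : ∀ a b : C(X, E), a ∈ A → b ∈ A → nn (a - b) = nn (b - a) := by
    intro a b ha hb
    have h := hnn.smul (-1) (b - a) (A.sub_mem hb ha)
    simpa [neg_sub] using h
  have hzero : ∀ f : ↥A, (f : C(X, E)) x = 0 → ψ f = 0 := by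
    intro f hfx
    obtain ⟨w, hwA, hwv, hwt⟩ := hP f x hfx
    have hψw : ∀ n, ψ ⟨w n, hwA n⟩ = 0 := by
      intro n
      obtain ⟨t, htp, hto, hxt⟩ := eventually_nhds_iff.mp (hwv n)
      exact hvan _ t hto hxt htp
    have key : ∀ n : ℕ, ‖ψ f‖ ≤ C' * nn (w n - (f : C(X, E))) := by
      intro n
      have h1 : ψ (f - ⟨w n, hwA n⟩) = ψ f := by rw [map_sub, hψw n, sub_zero]
      have h2 := hC'le (f - ⟨w n, hwA n⟩)
      rw [h1] at h2
      have h3 : ((f - (⟨w n, hwA n⟩ : ↥A) : ↥A) : C(X, E)) = (f : C(X, E)) - w n := rfl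
      rw [h3, nnsymm _ _ f.2 (hwA n)] at h2
      exact h2
    by_contra hne
    have hpos : 0 < ‖ψ f‖ := norm_pos_iff.mpr hne
    obtain ⟨N, hN⟩ := (Metric.tendsto_atTop.mp hwt) (‖ψ f‖ / (C' + 1)) (by positivity)
    have h5 := hN N le_rfl
    rw [Real.dist_eq, sub_zero] at h5
    have h6 : nn (w N - (f : C(X, E))) < ‖ψ f‖ / (C' + 1) :=
      lt_of_le_of_lt (le_abs_self _) h5
    have h7 := key N
    have h8 : ‖ψ f‖ ≤ C' * (‖ψ f‖ / (C' + 1)) :=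
      le_trans h7 (mul_le_mul_of_nonneg_left h6.le hC'0)
    have h9 : C' * (‖ψ f‖ / (C' + 1)) = C' * ‖ψ f‖ / (C' + 1) := (mul_div_assoc _ _ _).symm
    rw [h9] at h8
    have h10 : (0:ℝ) < C' + 1 := by linarith
    rw [le_div_iff₀ h10] at h8
    nlinarith
  let cst : E →ₗ[ℂ] ↥A :=
    { toFun := fun e => ⟨ContinuousMap.const X e, hconst e⟩
      map_add' := fun e e' => Subtype.ext (ContinuousMap.ext fun z => rfl)
      map_smul' := fun c e => Subtype.ext (ContinuousMap.ext fun z => rfl) }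
  refine cont_of_eq_eval A ψ x (ψ ∘ₗ cst) ?_
  intro f0
  have h1 : ((f0 - cst ((f0 : C(X, E)) x) : ↥A) : C(X, E)) x = 0 := sub_self _
  have h2 := hzero _ h1
  rw [map_sub, sub_eq_zero] at h2
  exact h2

theorem exists_small_big {nn : C(X, E) → ℝ} (hnn : IsCompleteNormOn A nn)
    (ψ : ↥A →ₗ[ℂ] ℂ)
    (hub : ∀ C : ℝ, ∃ f : ↥A, C * nn (f : C(X, E)) < ‖ψ f‖) (δ M : ℝ) (hδ : 0 < δ) :
    ∃ f : ↥A, nn (f : C(X, E)) ≤ δ ∧ M ≤ ‖ψ f‖ := by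
  have hnn0 : nn ((0 : ↥A) : C(X, E)) = 0 := (hnn.eq_zero_iff 0 A.zero_mem).mpr rfl
  rcases le_or_gt M 0 with hM | hM
  · refine ⟨0, ?_, ?_⟩
    · rw [hnn0]; exact hδ.le
    · rw [map_zero, norm_zero]; exact hM
  · obtain ⟨f, hf⟩ := hub (M / δ)
    have hnnf : 0 < nn ((f : ↥A) : C(X, E)) := by
      rcases (hnn.nonneg _ f.2).lt_or_eq with h | h
      · exact h
      · exfalso
        have hf0 : (f : C(X, E)) = 0 := (hnn.eq_zero_iff _ f.2).mp h.symm
        have : f = 0 := Subtype.ext hf0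
        rw [this, map_zero, norm_zero, hnn0, mul_zero] at hf
        exact lt_irrefl 0 hf
    set c : ℝ := δ / nn ((f : ↥A) : C(X, E)) with hcdef
    have hc : 0 < c := div_pos hδ hnnf
    have hcnorm : ‖(c : ℂ)‖ = c := by
      rw [Complex.norm_real]; exact Real.norm_of_nonneg hc.le
    refine ⟨(c : ℂ) • f, ?_, ?_⟩
    · have hcoe : (((c : ℂ) • f : ↥A) : C(X, E)) = (c : ℂ) • (f : C(X, E)) := rfl
      rw [hcoe, hnn.smul _ _ f.2, hcnorm]
      exact (div_mul_cancel₀ δ hnnf.ne').le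
    · have hψ : ψ ((c : ℂ) • f) = (c : ℂ) * ψ f := by rw [map_smul]; rfl
      rw [hψ, norm_mul, hcnorm]
      have hMeq : M = c * ((M / δ) * nn ((f : ↥A) : C(X, E))) := by
        rw [hcdef]; field_simp; try ring
      rw [hMeq]
      exact (mul_le_mul_of_nonneg_left hf.le hc.le)

theorem nn_sum_le {nn : C(X, E) → ℝ} (hnn : IsCompleteNormOn A nn)
    (G : ℕ → C(X, E)) (hG : ∀ k, G k ∈ A) (t : Finset ℕ) :
    nn (∑ k ∈ t, G k) ≤ ∑ k ∈ t, nn (G k) := by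
  classical
  induction t using Finset.induction with
  | empty => simp [(hnn.eq_zero_iff 0 A.zero_mem).mpr rfl]
  | @insert a t ha ih =>
    rw [Finset.sum_insert ha, Finset.sum_insert ha]
    exact le_trans (hnn.add_le _ (hG a) _ (Submodule.sum_mem A fun k _ => hG k))
      (by linarith)


/-- **Theorem 4.5 (ii).** Suppose `E` is finite dimensional, `A(X,E)` contains the
constants and carries a complete norm `nn ≥ ‖·‖_∞` with property (P) and
`nn(g·f) ≤ ‖g‖_{A(X)} nn(f)`.  For jointly separating `T, S : A(X,E) → C(Y,F)`,
the set `φ(⋃_{v*} Y_d^{v*})` is finite and consists of limit (non-isolated) points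
of `X`. -/
theorem image_YdUnion_finite
    [FiniteDimensional ℂ E]
    (B : Subalgebra ℂ C(X, ℂ)) (nB : C(X, ℂ) → ℝ)
    (hB : IsRegularBanachFunctionAlgebra B nB)
    (hmod : ∀ g ∈ B, ∀ f : ↥A, g • (f : C(X, E)) ∈ A)
    (hconst : ∀ e : E, ContinuousMap.const X e ∈ A)
    (nn : C(X, E) → ℝ) (hnn : IsCompleteNormOn A nn)
    (hP : HasPropertyP A nn)
    (hsubmul : ∀ g ∈ B, ∀ f : ↥A, nn (g • (f : C(X, E))) ≤ nB g * nn (f : C(X, E)))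
    (T S : ↥A →ₗ[ℂ] C(Y, F)) (hTS : JointlySeparatingV A T S)
    (φ : Y → X)
    (hφ : ∀ v : F →L[ℂ] ℂ, ∀ y ∈ Y1v A T S v,
      IsSupportPointFor A (fun f y => v (T f y)) (fun f y => v (S f y)) y (φ y)) :
    ∀ D : Set Y,
      D = ⋃ v : F →L[ℂ] ℂ, (Y1v A T S v \
          ({y ∈ Y1v A T S v | Continuous fun f : ↥A => v (T f y)} ∩
            {y ∈ Y1v A T S v | Continuous fun f : ↥A => v (S f y)})) →
      (φ '' D).Finite ∧ ∀ x ∈ φ '' D, (𝓝[≠] x).NeBot := by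
  intro D hD
  subst hD
  have hDmem : ∀ y : Y, y ∈ (⋃ v : F →L[ℂ] ℂ, (Y1v A T S v \
      ({y ∈ Y1v A T S v | Continuous fun f : ↥A => v (T f y)} ∩
        {y ∈ Y1v A T S v | Continuous fun f : ↥A => v (S f y)}))) →
      ∃ v : F →L[ℂ] ℂ, y ∈ Y1v A T S v ∧
        (¬ Continuous (fun f : ↥A => v (T f y)) ∨
          ¬ Continuous (fun f : ↥A => v (S f y))) := by
    intro y hy
    rw [mem_iUnion] at hy
    obtain ⟨v, hy1, hy2⟩ := hy
    refine ⟨v, hy1, ?_⟩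
    by_contra hcon
    push_neg at hcon
    exact hy2 ⟨⟨hy1, hcon.1⟩, ⟨hy1, hcon.2⟩⟩
  have keyR : ∀ (v : F →L[ℂ] ℂ) (y : Y), y ∈ Y1v A T S v → ∀ V : Set X, IsOpen V →
      φ y ∈ V → ∀ f : ↥A, (∀ z ∈ V, (f : C(X, E)) z = 0) →
      v (T f y) = 0 ∧ v (S f y) = 0 :=
    fun v y hy V hV hxV f hf =>
      key_vanish A hB hmod hTS v y (φ y) hy (hφ v y hy) hV hxV f hf
  constructor
  · -- finiteness
    rw [← Set.not_infinite]
    intro hinf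
    obtain ⟨x, U, hxS, hUo, hxU, hUd⟩ := exists_disjoint_nbhds hinf
    have hw : ∀ n, ∃ (y : Y) (v : F →L[ℂ] ℂ), φ y = x n ∧ y ∈ Y1v A T S v ∧
        (¬ Continuous (fun f : ↥A => v (T f y)) ∨
          ¬ Continuous (fun f : ↥A => v (S f y))) := by
      intro n
      obtain ⟨y, hyD, hyx⟩ := hxS n
      obtain ⟨v, h1, h2⟩ := hDmem y hyD
      exact ⟨y, v, hyx, h1, h2⟩
    choose y v hyx hy1 hnc using hw
    have hR : ∀ n, ∃ R : ↥A →ₗ[ℂ] C(Y, F), (R = T ∨ R = S) ∧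
        ¬ Continuous fun f : ↥A => v n (R f (y n)) := by
      intro n
      rcases hnc n with h | h
      exacts [⟨T, Or.inl rfl, h⟩, ⟨S, Or.inr rfl, h⟩]
    choose R hRor hRnc using hR
    have hvan : ∀ n, ∀ f : ↥A, ∀ V : Set X, IsOpen V → x n ∈ V →
        (∀ z ∈ V, (f : C(X, E)) z = 0) → v n (R n f (y n)) = 0 := by
      intro n f V hV hxV hf
      have hxV' : φ (y n) ∈ V := by rw [hyx n]; exact hxV
      have h := keyR (v n) (y n) (hy1 n) V hV hxV' f hf
      rcases hRor n with hh | hh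
      · rw [hh]; exact h.1
      · rw [hh]; exact h.2
    have hub : ∀ n, ∀ C : ℝ, ∃ f : ↥A, C * nn (f : C(X, E)) < ‖v n (R n f (y n))‖ := by
      intro n
      by_contra hcon
      push_neg at hcon
      obtain ⟨C, hC⟩ := hcon
      exact hRnc n (cont_of_nn_bounded A hconst hnn hP (psiAux A (R n) (v n) (y n)) (x n)
        (fun f V hV hxV hf => hvan n f V hV hxV hf) C (fun f => hC f))
    have hupick : ∀ n, ∃ u : C(X, ℂ), u ∈ B ∧ closure {z | u z ≠ 0} ⊆ U n ∧
        ∃ W : Set X, IsOpen W ∧ x n ∈ W ∧ W ⊆ U n ∧ ∀ z ∈ W, u z = 1 :=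
      fun n => exists_urysohn_B B nB hB (hUo n) (hxU n)
    choose u huB hucl W hWo hxW hWU hu1 using hupick
    have hδpos : ∀ n, 0 < ((2:ℝ)⁻¹) ^ n / (nB (u n) + 1) := by
      intro n
      have h0 := hB.norm_nonneg (u n) (huB n)
      positivity
    have hpick : ∀ n : ℕ, ∃ f : ↥A, nn (f : C(X, E)) ≤ ((2:ℝ)⁻¹) ^ n / (nB (u n) + 1) ∧
        (n : ℝ) * (1 + ‖v n‖) ≤ ‖v n (R n f (y n))‖ :=
      fun n => exists_small_big A hnn (psiAux A (R n) (v n) (y n)) (hub n) _ _ (hδpos n)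
    choose f hfs hfb using hpick
    let g : ℕ → ↥A := fun n => ⟨u n • ((f n : ↥A) : C(X, E)), hmod (u n) (huB n) (f n)⟩
    have hg_nn : ∀ n, nn ((g n : ↥A) : C(X, E)) ≤ ((2:ℝ)⁻¹) ^ n := by
      intro n
      have h1 := hsubmul (u n) (huB n) (f n)
      have h0 := hB.norm_nonneg (u n) (huB n)
      have h2 : nB (u n) * nn ((f n : ↥A) : C(X, E)) ≤
          nB (u n) * (((2:ℝ)⁻¹) ^ n / (nB (u n) + 1)) :=
        mul_le_mul_of_nonneg_left (hfs n) h0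
      have hp : (0:ℝ) < nB (u n) + 1 := by linarith
      have hpw : (0:ℝ) ≤ ((2:ℝ)⁻¹) ^ n := by positivity
      have h3 : nB (u n) * (((2:ℝ)⁻¹) ^ n / (nB (u n) + 1)) ≤ ((2:ℝ)⁻¹) ^ n := by
        rw [show nB (u n) * (((2:ℝ)⁻¹) ^ n / (nB (u n) + 1)) =
          nB (u n) * ((2:ℝ)⁻¹) ^ n / (nB (u n) + 1) from (mul_div_assoc _ _ _).symm,
          div_le_iff₀ hp]
        nlinarith
      exact le_trans h1 (le_trans h2 h3)
    have hg_coz : ∀ n, ∀ z : X, z ∉ U n → ((g n : ↥A) : C(X, E)) z = 0 := by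
      intro n z hz
      have huz : u n z = 0 := by
        by_contra h
        exact hz (hucl n (subset_closure h))
      show (u n • ((f n : ↥A) : C(X, E))) z = 0
      rw [ContinuousMap.smul_apply', huz, zero_smul]
    have hg_psi : ∀ n, v n (R n (g n) (y n)) = v n (R n (f n) (y n)) := by
      intro n
      have hv : v n (R n (f n - g n) (y n)) = 0 := by
        apply hvan n (f n - g n) (W n) (hWo n) (hxW n)
        intro z hz
        have hc : ((f n - g n : ↥A) : C(X, E)) z =
            (f n : C(X, E)) z - u n z • (f n : C(X, E)) z := rfl
        rw [hc, hu1 n z hz, one_smul, sub_self]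
      rw [map_sub, ContinuousMap.sub_apply, map_sub, sub_eq_zero] at hv
      exact hv.symm
    let Gc : ℕ → C(X, E) := fun k => ((g k : ↥A) : C(X, E))
    let sq : ℕ → C(X, E) := fun N => ∑ k ∈ Finset.range N, Gc k
    have hsqA : ∀ N, sq N ∈ A := fun N => Submodule.sum_mem A fun k _ => (g k).2
    have nnsymm : ∀ a b : C(X, E), a ∈ A → b ∈ A → nn (a - b) = nn (b - a) := by
      intro a b ha hb
      have h := hnn.smul (-1) (b - a) (A.sub_mem hb ha)
      simpa [neg_sub] using h
    have hbound : ∀ k m : ℕ, k ≤ m → nn (sq m - sq k) ≤ 2 * ((2:ℝ)⁻¹) ^ k := by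
      intro k m hkm
      have hsub : sq m - sq k = ∑ i ∈ Finset.Ico k m, Gc i :=
        (Finset.sum_Ico_eq_sub _ hkm).symm
      rw [hsub]
      calc nn (∑ i ∈ Finset.Ico k m, Gc i) ≤ ∑ i ∈ Finset.Ico k m, nn (Gc i) :=
            nn_sum_le A hnn Gc (fun i => (g i).2) _
        _ ≤ ∑ i ∈ Finset.Ico k m, ((2:ℝ)⁻¹) ^ i :=
            Finset.sum_le_sum fun i _ => hg_nn i
        _ ≤ ((2:ℝ)⁻¹) ^ k / (1 - 2⁻¹) :=
            geom_sum_Ico_le_of_lt_one (by norm_num) (by norm_num)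
        _ = 2 * ((2:ℝ)⁻¹) ^ k := by
            rw [show (1:ℝ) - 2⁻¹ = 2⁻¹ by norm_num, div_eq_mul_inv, inv_inv, mul_comm]
    have hcauchy : ∀ ε : ℝ, 0 < ε → ∃ N, ∀ m ≥ N, ∀ k ≥ N, nn (sq m - sq k) < ε := by
      intro ε hε
      obtain ⟨N, hN⟩ := exists_pow_lt_of_lt_one (half_pos hε) (by norm_num : (2:ℝ)⁻¹ < 1)
      refine ⟨N, fun m hm k hk => ?_⟩
      rcases le_total k m with h | h
      · have hb := hbound k m h
        have hpow : ((2:ℝ)⁻¹) ^ k ≤ ((2:ℝ)⁻¹) ^ N :=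
          pow_le_pow_of_le_one (by norm_num) (by norm_num) hk
        calc nn (sq m - sq k) ≤ 2 * ((2:ℝ)⁻¹) ^ k := hb
          _ ≤ 2 * ((2:ℝ)⁻¹) ^ N := by linarith
          _ < 2 * (ε / 2) := by linarith
          _ = ε := by ring
      · have hb := hbound m k h
        have hpow : ((2:ℝ)⁻¹) ^ m ≤ ((2:ℝ)⁻¹) ^ N :=
          pow_le_pow_of_le_one (by norm_num) (by norm_num) hm
        have hsymm2 : nn (sq m - sq k) = nn (sq k - sq m) :=
          nnsymm _ _ (hsqA m) (hsqA k)
        rw [hsymm2]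
        calc nn (sq k - sq m) ≤ 2 * ((2:ℝ)⁻¹) ^ m := hb
          _ ≤ 2 * ((2:ℝ)⁻¹) ^ N := by linarith
          _ < 2 * (ε / 2) := by linarith
          _ = ε := by ring
    obtain ⟨l, hlA, hconv⟩ := hnn.complete (fun N => sq N) (fun N => hsqA N) hcauchy
    have hlg : ∀ n, ∀ z ∈ U n, l z = Gc n z := by
      intro n z hz
      have hsqz : ∀ N, n < N → sq N z = Gc n z := by
        intro N hN
        show (∑ k ∈ Finset.range N, Gc k) z = Gc n z
        rw [ContinuousMap.sum_apply]
        refine Finset.sum_eq_single_of_mem n (Finset.mem_range.2 hN) ?_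
        intro k _ hk
        have hzk : z ∉ U k := fun hzk =>
          (Set.eq_empty_iff_forall_notMem.1 (hUd k n hk) z) ⟨hzk, hz⟩
        exact hg_coz k z hzk
      have hdiff : ∀ ε : ℝ, 0 < ε → ‖Gc n z - l z‖ < ε := by
        intro ε hε
        obtain ⟨N0, hN0⟩ := hconv ε hε
        set N := max N0 (n + 1) with hNdef
        have h1 : nn (sq N - l) < ε := hN0 N (le_max_left _ _)
        have h2 : ‖(sq N - l) z‖ ≤ ‖sq N - l‖ := ContinuousMap.norm_coe_le_norm _ z
        have h3 : ‖sq N - l‖ ≤ nn (sq N - l) := hnn.sup_norm_le _ (A.sub_mem (hsqA N) hlA)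
        have h4 : (sq N - l) z = Gc n z - l z := by
          rw [ContinuousMap.sub_apply,
            hsqz N (lt_of_lt_of_le (Nat.lt_succ_self n) (le_max_right _ _))]
        rw [← h4]
        linarith
      have h0 : ‖Gc n z - l z‖ = 0 := by
        by_contra h
        have hpos : 0 < ‖Gc n z - l z‖ := lt_of_le_of_ne (norm_nonneg _) (Ne.symm h)
        exact absurd (hdiff _ hpos) (lt_irrefl _)
      have := sub_eq_zero.mp (norm_eq_zero.mp h0)
      exact this.symm
    set lA : ↥A := ⟨l, hlA⟩ with hlAdef
    have hfinal : ∀ n : ℕ, (n : ℝ) * (1 + ‖v n‖) ≤ ‖v n (R n lA (y n))‖ := by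
      intro n
      have hv : v n (R n (lA - g n) (y n)) = 0 := by
        apply hvan n (lA - g n) (U n) (hUo n) (hxU n)
        intro z hz
        have hc : ((lA - g n : ↥A) : C(X, E)) z = l z - Gc n z := rfl
        rw [hc, hlg n z hz, sub_self]
      rw [map_sub, ContinuousMap.sub_apply, map_sub, sub_eq_zero] at hv
      rw [hv, hg_psi n]
      exact hfb n
    set Cst : ℝ := max ‖T lA‖ ‖S lA‖ with hCstdef
    have hCst0 : 0 ≤ Cst := le_trans (norm_nonneg (T lA)) (le_max_left _ _)
    have hn : ∀ n : ℕ, (n : ℝ) ≤ Cst := by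
      intro n
      have h1 : ‖v n (R n lA (y n))‖ ≤ ‖v n‖ * ‖R n lA (y n)‖ := (v n).le_opNorm _
      have h2 : ‖R n lA (y n)‖ ≤ Cst := by
        rcases hRor n with h | h
        · rw [h]; exact (ContinuousMap.norm_coe_le_norm _ _).trans (le_max_left _ _)
        · rw [h]; exact (ContinuousMap.norm_coe_le_norm _ _).trans (le_max_right _ _)
      have h3 := (hfinal n).trans
        (h1.trans (mul_le_mul_of_nonneg_left h2 (norm_nonneg _)))
      have hv0 : (0:ℝ) ≤ ‖v n‖ := norm_nonneg _
      nlinarith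
    obtain ⟨n, hn'⟩ := exists_nat_gt Cst
    exact absurd (hn n) (not_le.2 hn')
  · -- limit points
    rintro x ⟨y, hyD, rfl⟩
    obtain ⟨v, hy1, hnc⟩ := hDmem y hyD
    by_contra hbot
    have hbot' : 𝓝[≠] (φ y) = ⊥ := not_neBot.mp hbot
    have hopen : IsOpen ({φ y} : Set X) := (isOpen_singleton_iff_punctured_nhds _).2 hbot'
    have hct : Continuous fun f : ↥A => v (T f y) :=
      cont_of_isolated A hB hmod hconst (psiAux A T v y) (φ y) hopen
        (fun f hf => (keyR v y hy1 {φ y} hopen rfl f hf).1)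
    have hcs : Continuous fun f : ↥A => v (S f y) :=
      cont_of_isolated A hB hmod hconst (psiAux A S v y) (φ y) hopen
        (fun f hf => (keyR v y hy1 {φ y} hopen rfl f hf).2)
    rcases hnc with h | h
    · exact h hct
    · exact h hcs
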